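/- On the unit sphere S², fix k ∈ ℕ with k ≥ 1 and the north–south great circle replaced as follows: let S¹ = {p ∈ S² : p₃ = 0} be the equator, and let x₀, y₀ ∈ S¹ be at spherical distance 2s·(π/2k) with gcd(s, k) = 1. Define σ_s as the union of the half-circles {p ∈ S² : dist_{S²}(p, x₀) = (1+2i)·π/(2k), p₃ ≥ 0} and {p ∈ S² : dist_{S²}(p, y₀) = (1+2i)·π/(2k), p₃ ≤ 0} for i = 0, …, k−1. Then σ_s is a connected closed subset of S². -/

import Mathlib

open Real Set
open scoped RealInnerProductSpace

noncomputable section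
set_option maxHeartbeats 4000000

abbrev E3' := EuclideanSpace ℝ (Fin 3)

lemma triple_expand (x f n : E3')
    (hx : ⟪x, x⟫ = 1) (hf : ⟪f, f⟫ = 1) (hn : ⟪n, n⟫ = 1)
    (hxf : ⟪x, f⟫ = 0) (hxn : ⟪x, n⟫ = 0) (hfn : ⟪f, n⟫ = 0) (p : E3') :
    p = ⟪p, x⟫ • x + ⟪p, f⟫ • f + ⟪p, n⟫ • n := by
  have hfx : ⟪f, x⟫ = 0 := by rw [real_inner_comm]; exact hxf
  have hnx : ⟪n, x⟫ = 0 := by rw [real_inner_comm]; exact hxn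
  have hnf : ⟪n, f⟫ = 0 := by rw [real_inner_comm]; exact hfn
  set v : Fin 3 → E3' := ![x, f, n] with hv
  have horth : Orthonormal ℝ v := by
    rw [orthonormal_iff_ite]
    intro i j
    fin_cases i <;> fin_cases j <;>
      simp only [v, Matrix.cons_val_zero, Matrix.cons_val_one, Matrix.head_cons,
        Matrix.cons_val_two, Matrix.tail_cons, Fin.isValue] <;>
      first
        | simpa using hx
        | simpa using hf
        | simpa using hn
        | simpa using hxf
        | simpa using hxn
        | simpa using hfn
        | simpa using hfx
        | simpa using hnx
        | simpa using hnf
  have hcard : Fintype.card (Fin 3) = Module.finrank ℝ E3' := by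
    simp [finrank_euclideanSpace_fin]
  set b := basisOfLinearIndependentOfCardEqFinrank horth.linearIndependent hcard with hb
  have hbv : ⇑b = v := coe_basisOfLinearIndependentOfCardEqFinrank _ _
  have hrep : p = b.repr p 0 • x + b.repr p 1 • f + b.repr p 2 • n := by
    have h := b.sum_repr p
    rw [Fin.sum_univ_three, hbv] at h
    simp only [v, Matrix.cons_val_zero, Matrix.cons_val_one, Matrix.head_cons,
      Matrix.cons_val_two, Matrix.tail_cons] at h
    exact h.symm
  have e0 : ⟪p, x⟫ = b.repr p 0 := by
    conv_lhs => rw [hrep]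
    rw [inner_add_left, inner_add_left, real_inner_smul_left, real_inner_smul_left,
      real_inner_smul_left, hx, hfx, hnx]; ring
  have e1 : ⟪p, f⟫ = b.repr p 1 := by
    conv_lhs => rw [hrep]
    rw [inner_add_left, inner_add_left, real_inner_smul_left, real_inner_smul_left,
      real_inner_smul_left, hf, hxf, hnf]; ring
  have e2 : ⟪p, n⟫ = b.repr p 2 := by
    conv_lhs => rw [hrep]
    rw [inner_add_left, inner_add_left, real_inner_smul_left, real_inner_smul_left,
      real_inner_smul_left, hn, hxn, hfn]; ring
  rw [e0, e1, e2]; exact hrep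


lemma arc_eq (x f : E3') (hx1 : ⟪x, x⟫ = 1) (hf1 : ⟪f, f⟫ = 1) (hxf : ⟪x, f⟫ = 0)
    (hx2 : x 2 = 0) (hf2 : f 2 = 0) (ε ρ : ℝ) (hε : ε = 1 ∨ ε = -1)
    (hρ0 : 0 < ρ) (hρπ : ρ < π) :
    {p : E3' | ‖p‖ = 1 ∧ 0 ≤ ε * p 2 ∧ ⟪p, x⟫ = Real.cos ρ} =
      (fun t : ℝ => Real.cos ρ • x + (Real.sin ρ * Real.cos t) • f +
        (ε * (Real.sin ρ * Real.sin t)) • (EuclideanSpace.single 2 1 : E3')) '' Set.Icc 0 π := by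
  set nv : E3' := EuclideanSpace.single 2 1 with hnv
  have hpn : ∀ p : E3', ⟪p, nv⟫ = p 2 := fun p => by
    rw [hnv, EuclideanSpace.inner_single_right]; simp
  have hnn : ⟪nv, nv⟫ = 1 := by rw [hpn]; simp [hnv, EuclideanSpace.single_apply]
  have hxn : ⟪x, nv⟫ = 0 := by rw [hpn, hx2]
  have hfn : ⟪f, nv⟫ = 0 := by rw [hpn, hf2]
  have hfx : ⟪f, x⟫ = 0 := by rw [real_inner_comm]; exact hxf
  have hnx : ⟪nv, x⟫ = 0 := by rw [real_inner_comm]; exact hxn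
  have hnf : ⟪nv, f⟫ = 0 := by rw [real_inner_comm]; exact hfn
  have hexp : ∀ a b c a' b' c' : ℝ,
      ⟪a • x + b • f + c • nv, a' • x + b' • f + c' • nv⟫ = a * a' + b * b' + c * c' := by
    intro a b c a' b' c'
    simp only [inner_add_left, inner_add_right, real_inner_smul_left, real_inner_smul_right,
      hx1, hf1, hnn, hxf, hxn, hfn, hfx, hnx, hnf]
    ring
  have happ2 : ∀ a b c : ℝ, (a • x + b • f + c • nv) 2 = c := by
    intro a b c
    have : (a • x + b • f + c • nv) 2 = a * x 2 + b * f 2 + c * nv 2 := rfl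
    rw [this, hx2, hf2]
    simp [hnv, EuclideanSpace.single_apply]
  have hsρ : 0 < sin ρ := sin_pos_of_pos_of_lt_pi hρ0 hρπ
  have hε2 : ε * ε = 1 := by rcases hε with h | h <;> rw [h] <;> ring
  ext p
  constructor
  · rintro ⟨hp1, hp2, hp3⟩
    have hdec := triple_expand x f nv hx1 hf1 hnn hxf hxn hfn p
    rw [hpn] at hdec
    obtain ⟨a, ha⟩ : ∃ a : ℝ, ⟪p, x⟫ = a := ⟨_, rfl⟩
    obtain ⟨b, hb⟩ : ∃ b : ℝ, ⟪p, f⟫ = b := ⟨_, rfl⟩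
    obtain ⟨c, hc⟩ : ∃ c : ℝ, p 2 = c := ⟨_, rfl⟩
    rw [ha, hb, hc] at hdec
    rw [ha] at hp3
    rw [hc] at hp2
    have hself : ⟪p, p⟫ = 1 := by
      rw [real_inner_self_eq_norm_mul_norm, hp1]; ring
    rw [hdec, hexp] at hself
    rw [hp3] at hself
    have hbc : b ^ 2 + c ^ 2 = (sin ρ) ^ 2 := by
      nlinarith [sin_sq_add_cos_sq ρ]
    have hble : |b| ≤ sin ρ := by
      rw [abs_le]
      constructor
      · nlinarith [sq_nonneg (b + sin ρ), sq_nonneg c, hsρ.le]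
      · nlinarith [sq_nonneg (b - sin ρ), sq_nonneg c, hsρ.le]
    rw [abs_le] at hble
    refine ⟨arccos (b / sin ρ), ⟨arccos_nonneg _, arccos_le_pi _⟩, ?_⟩
    have hcost : cos (arccos (b / sin ρ)) = b / sin ρ := by
      apply cos_arccos
      · rw [le_div_iff₀ hsρ]; linarith [hble.1]
      · rw [div_le_one hsρ]; exact hble.2
    have hsint : sin (arccos (b / sin ρ)) = |c| / sin ρ := by
      rw [sin_arccos]
      have h1 : 1 - (b / sin ρ) ^ 2 = (|c| / sin ρ) ^ 2 := by
        rw [div_pow, div_pow, sq_abs]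
        field_simp
        nlinarith
      rw [h1, Real.sqrt_sq (by positivity)]
    have hcc : ε * (sin ρ * (|c| / sin ρ)) = c := by
      rcases hε with h | h <;> rw [h] at hp2 ⊢
      · rw [one_mul] at hp2
        rw [abs_of_nonneg hp2]; field_simp
      · have hc0 : c ≤ 0 := by nlinarith
        rw [abs_of_nonpos hc0]; field_simp
    have hbb : sin ρ * (b / sin ρ) = b := by field_simp
    dsimp only
    rw [hcost, hsint, hbb, hcc, ← hp3]
    exact hdec.symm
  · rintro ⟨t, ⟨ht0, htpi⟩, rfl⟩
    have hst : 0 ≤ sin t := sin_nonneg_of_nonneg_of_le_pi ht0 htpi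
    have hnorm : ∀ a b c : ℝ, a * a + b * b + c * c = 1 → ‖a • x + b • f + c • nv‖ = 1 := by
      intro a b c h
      have h2 := real_inner_self_eq_norm_mul_norm (a • x + b • f + c • nv)
      rw [hexp] at h2
      nlinarith [norm_nonneg (a • x + b • f + c • nv)]
    dsimp only
    refine ⟨?_, ?_, ?_⟩
    · apply hnorm
      have h1 := sin_sq_add_cos_sq ρ
      have h2 := sin_sq_add_cos_sq t
      have h5 : cos ρ * cos ρ + sin ρ * cos t * (sin ρ * cos t) +
          ε * (sin ρ * sin t) * (ε * (sin ρ * sin t)) =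
          cos ρ ^ 2 + (ε * ε) * (sin ρ ^ 2 * sin t ^ 2) + sin ρ ^ 2 * cos t ^ 2 := by ring
      rw [h5, hε2]
      linear_combination h1 + sin ρ ^ 2 * h2
    · rw [happ2]
      have h3 : ε * (ε * (sin ρ * sin t)) = sin ρ * sin t := by rw [← mul_assoc, hε2, one_mul]
      rw [h3]
      positivity
    · rw [inner_add_left, inner_add_left, real_inner_smul_left, real_inner_smul_left,
        real_inner_smul_left, hx1, hfx, hnx]
      ring

lemma arc_connected (x f : E3') (hx1 : ⟪x, x⟫ = 1) (hf1 : ⟪f, f⟫ = 1) (hxf : ⟪x, f⟫ = 0)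
    (hx2 : x 2 = 0) (hf2 : f 2 = 0) (ε ρ : ℝ) (hε : ε = 1 ∨ ε = -1)
    (hρ0 : 0 < ρ) (hρπ : ρ < π) :
    IsConnected {p : E3' | ‖p‖ = 1 ∧ 0 ≤ ε * p 2 ∧ ⟪p, x⟫ = Real.cos ρ} := by
  rw [arc_eq x f hx1 hf1 hxf hx2 hf2 ε ρ hε hρ0 hρπ]
  have hIcc : IsConnected (Set.Icc (0:ℝ) π) := ⟨nonempty_Icc.2 pi_pos.le, isPreconnected_Icc⟩
  apply hIcc.image
  apply Continuous.continuousOn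
  apply Continuous.add
  apply Continuous.add
  · exact continuous_const
  · exact ((continuous_const.mul Real.continuous_cos).smul continuous_const)
  · exact (((continuous_const.mul (continuous_const.mul Real.continuous_sin))).smul
      continuous_const)


/-- The intrinsic (angular) distance between points of the unit sphere in `ℝ³`. -/
noncomputable def sphereDist (p q : EuclideanSpace ℝ (Fin 3)) : ℝ :=
  Real.arccos (inner ℝ p q)

/-- The curve `σ_s ⊂ S²`: the union of the half-circles of spherical radii
`(1+2i)·π/(2k)`, `i = 0, …, k-1`, around `x₀` in the closed upper hemisphere and
around `y₀` in the closed lower hemisphere. -/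
def sigmaSphere (k : ℕ) (x₀ y₀ : EuclideanSpace ℝ (Fin 3)) :
    Set (EuclideanSpace ℝ (Fin 3)) :=
  {p | p ∈ Metric.sphere (0 : EuclideanSpace ℝ (Fin 3)) 1 ∧ 0 ≤ p 2 ∧
        ∃ i : ℕ, i < k ∧ sphereDist p x₀ = (1 + 2 * i) * (π / (2 * k))} ∪
  {p | p ∈ Metric.sphere (0 : EuclideanSpace ℝ (Fin 3)) 1 ∧ p 2 ≤ 0 ∧
        ∃ i : ℕ, i < k ∧ sphereDist p y₀ = (1 + 2 * i) * (π / (2 * k))}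

/-- For `x₀, y₀` on the equator at spherical distance `2s·π/(2k)` with
`gcd(s,k) = 1`, the set `σ_s` is a connected closed subset of `S²`. -/
theorem sigmaSphere_closed_connected (k s : ℕ) (hk : 1 ≤ k)
    (hcop : Nat.Coprime s k)
    (x₀ y₀ : EuclideanSpace ℝ (Fin 3))
    (hx : x₀ ∈ Metric.sphere (0 : EuclideanSpace ℝ (Fin 3)) 1) (hx2 : x₀ 2 = 0)
    (hy : y₀ ∈ Metric.sphere (0 : EuclideanSpace ℝ (Fin 3)) 1) (hy2 : y₀ 2 = 0)
    (hdist : sphereDist x₀ y₀ = 2 * s * (π / (2 * k))) :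
    sigmaSphere k x₀ y₀ ⊆ Metric.sphere (0 : EuclideanSpace ℝ (Fin 3)) 1 ∧
    IsClosed (sigmaSphere k x₀ y₀) ∧ IsConnected (sigmaSphere k x₀ y₀) := by
  haveI : NeZero k := ⟨by omega⟩
  have hkR : (0:ℝ) < k := by exact_mod_cast hk
  set u : ℝ := π / (2 * k) with hu_def
  have hu : 0 < u := by rw [hu_def]; positivity
  have h4ku : (4 * (k:ℝ)) * u = 2 * π := by rw [hu_def]; field_simp; ring
  have h2ku : (2 * (k:ℝ)) * u = π := by rw [hu_def]; field_simp
  have hx1 : ‖x₀‖ = 1 := by simpa using mem_sphere_zero_iff_norm.mp hx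
  have hy1 : ‖y₀‖ = 1 := by simpa using mem_sphere_zero_iff_norm.mp hy
  have hnorm1 : ∀ v : E3', ⟪v, v⟫ = 1 → ‖v‖ = 1 := by
    intro v h
    have h2 := real_inner_self_eq_norm_mul_norm v
    nlinarith only [h, h2, norm_nonneg v]
  have hxx : ⟪x₀, x₀⟫ = 1 := by rw [real_inner_self_eq_norm_mul_norm, hx1]; ring
  have hyy : ⟪y₀, y₀⟫ = 1 := by rw [real_inner_self_eq_norm_mul_norm, hy1]; ring
  -- the angle between x₀ and y₀
  have hα_eq : Real.arccos ⟪x₀, y₀⟫ = 2 * s * u := hdist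
  have hα0 : (0:ℝ) ≤ 2 * s * u := by positivity
  have hαπ : 2 * (s:ℝ) * u ≤ π := hα_eq ▸ Real.arccos_le_pi _
  have hxy_bound : |⟪x₀, y₀⟫| ≤ 1 := by
    have := abs_real_inner_le_norm x₀ y₀
    rwa [hx1, hy1, one_mul] at this
  rw [abs_le] at hxy_bound
  have hxyinner : ⟪x₀, y₀⟫ = Real.cos (2 * s * u) := by
    rw [← hα_eq, Real.cos_arccos hxy_bound.1 hxy_bound.2]
  -- an auxiliary equatorial vector orthogonal to x₀
  have hsingle : ∀ (v : E3') (i : Fin 3), ⟪v, EuclideanSpace.single i (1:ℝ)⟫ = v i := by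
    intro v i; rw [EuclideanSpace.inner_single_right]; simp
  set f₀ : E3' := (-(x₀ 1)) • EuclideanSpace.single 0 1 + (x₀ 0) • EuclideanSpace.single 1 1
    with hf₀def
  have hvf₀ : ∀ v : E3', ⟪v, f₀⟫ = -(x₀ 1) * v 0 + x₀ 0 * v 1 := by
    intro v
    rw [hf₀def, inner_add_right, real_inner_smul_right, real_inner_smul_right,
      hsingle, hsingle]
  have hf₀2 : f₀ 2 = 0 := by
    rw [hf₀def]
    simp [EuclideanSpace.single_apply]
  have hxcoord : x₀ 0 * x₀ 0 + x₀ 1 * x₀ 1 + x₀ 2 * x₀ 2 = 1 := by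
    have h := hxx
    simp only [PiLp.inner_apply, RCLike.inner_apply, conj_trivial, Fin.sum_univ_three] at h
    linarith only [h]
  have hxf₀ : ⟪x₀, f₀⟫ = 0 := by rw [hvf₀]; ring
  have hff₀ : ⟪f₀, f₀⟫ = 1 := by
    rw [hvf₀]
    have h0 : f₀ 0 = -(x₀ 1) := by rw [hf₀def]; simp [EuclideanSpace.single_apply]
    have h1 : f₀ 1 = x₀ 0 := by rw [hf₀def]; simp [EuclideanSpace.single_apply]
    rw [h0, h1]
    nlinarith only [hxcoord, hx2]
  -- choose the sign of f so that ⟪y₀, f⟫ ≥ 0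
  set f : E3' := if 0 ≤ ⟪y₀, f₀⟫ then f₀ else -f₀ with hfdef
  have hf2 : f 2 = 0 := by
    rw [hfdef]; split_ifs <;> simp [hf₀2]
  have hxf : ⟪x₀, f⟫ = 0 := by
    rw [hfdef]; split_ifs <;> simp [inner_neg_right, hxf₀]
  have hff : ⟪f, f⟫ = 1 := by
    rw [hfdef]; split_ifs <;> simp only [inner_neg_right, inner_neg_left, neg_neg, hff₀]
  have hyf0 : 0 ≤ ⟪y₀, f⟫ := by
    rw [hfdef]; split_ifs with h
    · exact h
    · rw [inner_neg_right]; linarith only [lt_of_not_ge h]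
  have hfx : ⟪f, x₀⟫ = 0 := by rw [real_inner_comm]; exact hxf
  -- the north direction
  set nv : E3' := EuclideanSpace.single 2 1 with hnvdef
  have hpn : ∀ p : E3', ⟪p, nv⟫ = p 2 := fun p => by rw [hnvdef]; exact hsingle p 2
  have hnn : ⟪nv, nv⟫ = 1 := by rw [hpn, hnvdef]; simp [EuclideanSpace.single_apply]
  have hxn : ⟪x₀, nv⟫ = 0 := by rw [hpn, hx2]
  have hfn : ⟪f, nv⟫ = 0 := by rw [hpn, hf2]
  -- decomposition of y₀
  have hsin0 : 0 ≤ Real.sin (2 * s * u) := Real.sin_nonneg_of_nonneg_of_le_pi hα0 hαπ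
  have hyf : ⟪y₀, f⟫ = Real.sin (2 * s * u) := by
    have hydec := triple_expand x₀ f nv hxx hff hnn hxf hxn hfn y₀
    rw [hpn, hy2] at hydec
    have hyx : ⟪y₀, x₀⟫ = Real.cos (2 * s * u) := by rw [real_inner_comm]; exact hxyinner
    rw [hyx] at hydec
    have hy_self : ⟪y₀, y₀⟫ = Real.cos (2*s*u) * Real.cos (2*s*u) + ⟪y₀,f⟫ * ⟪y₀,f⟫ := by
      conv_lhs => rw [hydec]
      rw [inner_add_left, inner_add_left, real_inner_smul_left, real_inner_smul_left,
        real_inner_smul_left]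
      rw [inner_add_right, inner_add_right, inner_add_right, inner_add_right,
        inner_add_right, inner_add_right]
      simp only [real_inner_smul_right, hxx, hff, hnn, hxf, hxn, hfn, hfx,
        real_inner_comm nv x₀, real_inner_comm nv f]
      ring
    rw [hyy] at hy_self
    have hsq : ⟪y₀,f⟫ * ⟪y₀,f⟫ = Real.sin (2*s*u) * Real.sin (2*s*u) := by
      have h9 := Real.sin_sq_add_cos_sq (2*s*u)
      nlinarith only [h9, hy_self]
    have hfactor : (⟪y₀,f⟫ - Real.sin (2*s*u)) * (⟪y₀,f⟫ + Real.sin (2*s*u)) = 0 := by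
      linear_combination hsq
    rcases mul_eq_zero.mp hfactor with h | h
    · linarith only [h]
    · linarith only [h, hyf0, hsin0]
  have hy_expand : y₀ = Real.cos (2*s*u) • x₀ + Real.sin (2*s*u) • f := by
    have hydec := triple_expand x₀ f nv hxx hff hnn hxf hxn hfn y₀
    rw [hpn, hy2, hyf, real_inner_comm x₀ y₀, hxyinner] at hydec
    simpa using hydec
  -- second basis vector for the plane orthogonal to y₀ in the equator
  set fy : E3' := (-(Real.sin (2*s*u))) • x₀ + Real.cos (2*s*u) • f with hfydef
  have hexp2 : ∀ a b a' b' : ℝ, ⟪a • x₀ + b • f, a' • x₀ + b' • f⟫ = a * a' + b * b' := by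
    intro a b a' b'
    rw [inner_add_left, inner_add_right, inner_add_right]
    simp only [real_inner_smul_left, real_inner_smul_right, hxx, hff, hxf, hfx]
    ring
  have hfy2 : fy 2 = 0 := by
    rw [hfydef]
    simp [PiLp.add_apply, PiLp.smul_apply, hx2, hf2]
  have hyfy : ⟪y₀, fy⟫ = 0 := by
    rw [hy_expand, hfydef, hexp2]; ring
  have hfyfy : ⟪fy, fy⟫ = 1 := by
    rw [hfydef, hexp2]
    linear_combination Real.sin_sq_add_cos_sq (2*s*u)
  -- the equator curve
  set eq : ℝ → E3' := fun θ => Real.cos θ • x₀ + Real.sin θ • f with heqdef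
  have heqnorm : ∀ θ, ‖eq θ‖ = 1 := by
    intro θ
    apply hnorm1
    rw [heqdef]
    dsimp only
    rw [hexp2]
    linear_combination Real.sin_sq_add_cos_sq θ
  have heq2 : ∀ θ, (eq θ) 2 = 0 := by
    intro θ
    rw [heqdef]
    simp [PiLp.add_apply, PiLp.smul_apply, hx2, hf2]
  have heqx : ∀ θ, ⟪eq θ, x₀⟫ = Real.cos θ := by
    intro θ
    rw [heqdef]
    dsimp only
    rw [inner_add_left, real_inner_smul_left, real_inner_smul_left, hxx, hfx]
    ring
  have heqy : ∀ θ, ⟪eq θ, y₀⟫ = Real.cos (θ - 2*s*u) := by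
    intro θ
    rw [hy_expand, heqdef]
    dsimp only
    rw [hexp2, Real.cos_sub]
  -- arithmetic of angles
  have cos_mod : ∀ a b : ℤ, (4*(k:ℤ)) ∣ (a - b) → Real.cos ((a:ℝ)*u) = Real.cos ((b:ℝ)*u) := by
    intro a b ⟨q, hq⟩
    have hab : (a:ℝ) = (b:ℝ) + 4*(k:ℝ)*(q:ℝ) := by
      have : a = b + 4*(k:ℤ)*q := by linarith only [hq]
      exact_mod_cast congrArg (Int.cast : ℤ → ℝ) this
    rw [hab]
    have : ((b:ℝ) + 4*(k:ℝ)*(q:ℝ)) * u = (b:ℝ)*u + (q:ℤ) * (2*π) := by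
      rw [← h4ku]; push_cast; ring
    rw [this, Real.cos_add_int_mul_two_pi]
  have hkZ : (1:ℤ) ≤ (k:ℤ) := by exact_mod_cast hk
  have ext_lemma : ∀ m : ℤ, ∃ i : ℕ, i < k ∧
      Real.arccos (Real.cos ((2*(m:ℝ)+1) * u)) = (1 + 2*(i:ℝ)) * u := by
    intro m
    obtain ⟨n4, hn4def⟩ : ∃ n4 : ℤ, n4 = (2*m+1) % (4*(k:ℤ)) := ⟨_, rfl⟩
    have h0 : 0 ≤ n4 := by rw [hn4def]; exact Int.emod_nonneg _ (by omega)
    have h1 : n4 < 4*(k:ℤ) := by rw [hn4def]; exact Int.emod_lt_of_pos _ (by omega)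
    have hq : n4 = 2*m+1 - 4*(k:ℤ) * ((2*m+1) / (4*(k:ℤ))) := by
      rw [hn4def, Int.emod_def]
    have hmod : (4*(k:ℤ)) ∣ (2*m+1 - n4) := ⟨(2*m+1) / (4*(k:ℤ)), by linarith only [hq]⟩
    have hodd : n4 % 2 = 1 := by
      rw [hn4def, Int.emod_emod_of_dvd _ (⟨2*(k:ℤ), by ring⟩ : (2:ℤ) ∣ 4*(k:ℤ))]
      omega
    clear hq hn4def
    have hcosn : Real.cos ((2*(m:ℝ)+1) * u) = Real.cos ((n4:ℝ)*u) := by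
      have := cos_mod (2*m+1) n4 hmod
      rw [← this]
      norm_num
    by_cases hcase : n4 < 2*(k:ℤ)
    · obtain ⟨i, hik, hi⟩ : ∃ i : ℕ, i < k ∧ (1 + 2*(i:ℤ)) = n4 :=
        ⟨((n4-1)/2).toNat, by omega, by omega⟩
      refine ⟨i, hik, ?_⟩
      have hiR : ((1:ℝ) + 2*(i:ℝ)) = (n4:ℝ) := by exact_mod_cast congrArg (Int.cast : ℤ → ℝ) hi
      rw [hcosn, ← hiR]
      apply Real.arccos_cos
      · positivity
      · rw [← h2ku]
        have : (1:ℝ) + 2*(i:ℝ) ≤ 2*(k:ℝ) := by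
          have : (1:ℤ) + 2*(i:ℤ) ≤ 2*(k:ℤ) := by omega
          exact_mod_cast this
        exact mul_le_mul_of_nonneg_right this hu.le
    · set n5 : ℤ := 4*(k:ℤ) - n4 with hn5def
      obtain ⟨i, hik, hi⟩ : ∃ i : ℕ, i < k ∧ (1 + 2*(i:ℤ)) = n5 :=
        ⟨((n5-1)/2).toNat, by omega, by omega⟩
      refine ⟨i, hik, ?_⟩
      have hiR : ((1:ℝ) + 2*(i:ℝ)) = (n5:ℝ) := by exact_mod_cast congrArg (Int.cast : ℤ → ℝ) hi
      have hcosn5 : Real.cos ((n4:ℝ)*u) = Real.cos ((n5:ℝ)*u) := by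
        have hang : (n4:ℝ)*u = -((n5:ℝ)*u) + (1:ℤ)*(2*π) := by
          have : (n4:ℝ) = 4*(k:ℝ) - (n5:ℝ) := by
            have : n4 = 4*(k:ℤ) - n5 := by omega
            exact_mod_cast congrArg (Int.cast : ℤ → ℝ) this
          rw [this, ← h4ku]; push_cast; ring
        rw [hang, Real.cos_add_int_mul_two_pi, Real.cos_neg]
      rw [hcosn, hcosn5, ← hiR]
      apply Real.arccos_cos
      · positivity
      · rw [← h2ku]
        have : (1:ℝ) + 2*(i:ℝ) ≤ 2*(k:ℝ) := by
          have : (1:ℤ) + 2*(i:ℤ) ≤ 2*(k:ℤ) := by omega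
          exact_mod_cast this
        exact mul_le_mul_of_nonneg_right this hu.le
  have hr_bounds : ∀ i : ℕ, i < k → 0 ≤ (1+2*(i:ℝ))*u ∧ (1+2*(i:ℝ))*u ≤ π := by
    intro i hik
    constructor
    · positivity
    · rw [← h2ku]
      have h : (1:ℝ) + 2*i ≤ 2*k := by exact_mod_cast (by omega : (1:ℕ)+2*i ≤ 2*k)
      exact mul_le_mul_of_nonneg_right h hu.le
  -- the families of upper and lower half-circles
  set UA : ℤ → Set E3' := fun m =>
    {p : E3' | ‖p‖ = 1 ∧ 0 ≤ p 2 ∧ ⟪p, x₀⟫ = Real.cos ((2*(m:ℝ)+1)*u)} with hUAdef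
  set LB : ℤ → Set E3' := fun m =>
    {p : E3' | ‖p‖ = 1 ∧ p 2 ≤ 0 ∧ ⟪p, y₀⟫ = Real.cos ((2*(m:ℝ)+1)*u)} with hLBdef
  set S : Bool × ℤ → Set E3' := fun z => cond z.1 (LB z.2) (UA z.2) with hSdef
  have hSf : ∀ m : ℤ, S (false, m) = UA m := fun m => rfl
  have hSt : ∀ m : ℤ, S (true, m) = LB m := fun m => rfl
  have hdist_iff : ∀ (p w : E3'), ‖p‖ = 1 → ‖w‖ = 1 → ∀ r : ℝ, 0 ≤ r → r ≤ π →
      (sphereDist p w = r ↔ ⟪p, w⟫ = Real.cos r) := by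
    intro p w hp hw r hr0 hrπ
    have hb : |⟪p, w⟫| ≤ 1 := by
      have := abs_real_inner_le_norm p w
      rwa [hp, hw, one_mul] at this
    rw [abs_le] at hb
    constructor
    · intro h
      rw [← h]
      exact (Real.cos_arccos hb.1 hb.2).symm
    · intro h
      show Real.arccos ⟪p, w⟫ = r
      rw [h, Real.arccos_cos hr0 hrπ]
  have hσ : sigmaSphere k x₀ y₀ = ⋃ z : Bool × ℤ, S z := by
    ext p
    simp only [sigmaSphere, Set.mem_union, Set.mem_setOf_eq, Set.mem_iUnion,
      mem_sphere_zero_iff_norm]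
    constructor
    · rintro (⟨hp1, hp2, i, hik, hd⟩ | ⟨hp1, hp2, i, hik, hd⟩)
      · refine ⟨(false, (i:ℤ)), ?_⟩
        rw [hSf, hUAdef]
        refine ⟨hp1, hp2, ?_⟩
        rw [← hu_def] at hd
        have hb := hr_bounds i hik
        have h2 : ⟪p, x₀⟫ = Real.cos ((1+2*(i:ℝ))*u) :=
          (hdist_iff p x₀ hp1 hx1 _ hb.1 hb.2).mp hd
        have hang : ((2*(((i:ℤ)):ℝ)+1)*u) = (1+2*(i:ℝ))*u := by push_cast; ring
        rw [hang]
        exact h2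
      · refine ⟨(true, (i:ℤ)), ?_⟩
        rw [hSt, hLBdef]
        refine ⟨hp1, hp2, ?_⟩
        rw [← hu_def] at hd
        have hb := hr_bounds i hik
        have h2 : ⟪p, y₀⟫ = Real.cos ((1+2*(i:ℝ))*u) :=
          (hdist_iff p y₀ hp1 hy1 _ hb.1 hb.2).mp hd
        have hang : ((2*(((i:ℤ)):ℝ)+1)*u) = (1+2*(i:ℝ))*u := by push_cast; ring
        rw [hang]
        exact h2
    · rintro ⟨⟨b, m⟩, hmem⟩
      cases b
      · rw [hSf, hUAdef] at hmem
        obtain ⟨h1, h2, h3⟩ := hmem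
        left
        refine ⟨h1, h2, ?_⟩
        obtain ⟨i, hik, harc⟩ := ext_lemma m
        refine ⟨i, hik, ?_⟩
        rw [← hu_def]
        have hsd : sphereDist p x₀ = Real.arccos ⟪p, x₀⟫ := rfl
        rw [hsd, h3]
        exact harc
      · rw [hSt, hLBdef] at hmem
        obtain ⟨h1, h2, h3⟩ := hmem
        right
        refine ⟨h1, h2, ?_⟩
        obtain ⟨i, hik, harc⟩ := ext_lemma m
        refine ⟨i, hik, ?_⟩
        rw [← hu_def]
        have hsd : sphereDist p y₀ = Real.arccos ⟪p, y₀⟫ := rfl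
        rw [hsd, h3]
        exact harc
  -- each half-circle is connected
  have hSconn : ∀ z : Bool × ℤ, IsConnected (S z) := by
    rintro ⟨b, m⟩
    obtain ⟨i, hik, harc⟩ := ext_lemma m
    have hρ0 : 0 < (1+2*(i:ℝ))*u := by positivity
    have hρπ : (1+2*(i:ℝ))*u < π := by
      rw [← h2ku]
      have h : (1:ℝ) + 2*i < 2*k := by exact_mod_cast (by omega : (1:ℕ)+2*i < 2*k)
      exact mul_lt_mul_of_pos_right h hu
    have hcos : Real.cos ((2*(m:ℝ)+1)*u) = Real.cos ((1+2*(i:ℝ))*u) := by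
      rw [← harc, Real.cos_arccos (Real.neg_one_le_cos _) (Real.cos_le_one _)]
    cases b
    · rw [hSf]
      have h := arc_connected x₀ f hxx hff hxf hx2 hf2 1 ((1+2*(i:ℝ))*u) (Or.inl rfl) hρ0 hρπ
      have hset : UA m =
          {p : E3' | ‖p‖ = 1 ∧ 0 ≤ (1:ℝ) * p 2 ∧ ⟪p, x₀⟫ = Real.cos ((1+2*(i:ℝ))*u)} := by
        rw [hUAdef]
        ext q
        simp only [Set.mem_setOf_eq, one_mul, hcos]
      rw [hset]
      exact h
    · rw [hSt]
      have h := arc_connected y₀ fy hyy hfyfy hyfy hy2 hfy2 (-1) ((1+2*(i:ℝ))*u)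
        (Or.inr rfl) hρ0 hρπ
      have hset : LB m =
          {p : E3' | ‖p‖ = 1 ∧ 0 ≤ (-1:ℝ) * p 2 ∧ ⟪p, y₀⟫ = Real.cos ((1+2*(i:ℝ))*u)} := by
        rw [hLBdef]
        ext q
        simp only [Set.mem_setOf_eq, hcos, neg_mul, one_mul, neg_nonneg]
      rw [hset]
      exact h
  -- points on the equator
  set Ept : ℤ → E3' := fun a => eq ((a:ℝ)*u) with hEptdef
  have hmemUA : ∀ a m : ℤ, Real.cos ((a:ℝ)*u) = Real.cos ((2*(m:ℝ)+1)*u) → Ept a ∈ UA m := by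
    intro a m h
    rw [hEptdef, hUAdef]
    dsimp only
    refine ⟨heqnorm _, ?_, ?_⟩
    · rw [heq2]
    · rw [heqx]; exact h
  have hmemLB : ∀ a m : ℤ, Real.cos (((a:ℝ)-2*s)*u) = Real.cos ((2*(m:ℝ)+1)*u) →
      Ept a ∈ LB m := by
    intro a m h
    rw [hEptdef, hLBdef]
    dsimp only
    refine ⟨heqnorm _, ?_, ?_⟩
    · rw [heq2]
    · rw [heqy]
      have hang : (a:ℝ)*u - 2*(s:ℝ)*u = ((a:ℝ)-2*s)*u := by ring
      rw [hang]; exact h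
  -- the touching relation on indices
  set rel : Bool × ℤ → Bool × ℤ → Prop := fun z w => (S z ∩ S w).Nonempty with hreldef
  have hsymm : ∀ z w, rel z w → rel w z := by
    rintro z w ⟨p, h1, h2⟩; exact ⟨p, h2, h1⟩
  have hstep1 : ∀ m : ℤ, rel (false, m) (true, m - s) := by
    intro m
    refine ⟨Ept (2*m+1), ?_, ?_⟩
    · rw [hSf]; apply hmemUA; congr 1; push_cast; ring
    · rw [hSt]; apply hmemLB; congr 1; push_cast; ring
  have hstep2 : ∀ m : ℤ, rel (true, m - s) (false, 2*s - m - 1) := by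
    intro m
    refine ⟨Ept (4*s-2*m-1), ?_, ?_⟩
    · rw [hSt]; apply hmemLB
      rw [show ((((4*(s:ℤ)-2*m-1 : ℤ)):ℝ) - 2*(s:ℝ))*u = -((2*(((m - (s:ℤ) : ℤ)):ℝ)+1)*u) from
        by push_cast; ring, Real.cos_neg]
    · rw [hSf]; apply hmemUA; congr 1; push_cast; ring
  have hIdent : ∀ m m' : ℤ,
      ((4*(k:ℤ)) ∣ (2*m+1 - (2*m'+1)) ∨ (4*(k:ℤ)) ∣ (2*m+1 + (2*m'+1))) →
      rel (false, m) (false, m') := by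
    intro m m' h
    refine ⟨Ept (2*m+1), ?_, ?_⟩
    · rw [hSf]; apply hmemUA; congr 1; push_cast; ring
    · rw [hSf]; apply hmemUA
      rcases h with h | h
      · rw [cos_mod (2*m+1) (2*m'+1) h]; congr 1; push_cast; ring
      · rw [cos_mod (2*m+1) (-(2*m'+1)) (by rw [sub_neg_eq_add]; exact h)]
        rw [show (((-(2*m'+1) : ℤ)):ℝ)*u = -((2*((m':ℤ):ℝ)+1)*u) from by push_cast; ring,
          Real.cos_neg]
  have hmove_neg : ∀ m : ℤ, rel (false, m) (false, -1-m) :=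
    fun m => hIdent m (-1-m) (Or.inr ⟨0, by ring⟩)
  have hmove_plus : ∀ m : ℤ, Relation.ReflTransGen rel (false, m) (false, m + 2*s) := by
    intro m
    have h1 := hmove_neg m
    have h2 := hstep1 (-1-m)
    have h3 := hstep2 (-1-m)
    rw [show (2*(s:ℤ) - (-1-m) - 1) = m + 2*s from by ring] at h3
    exact ((Relation.ReflTransGen.refl.tail h1).tail h2).tail h3
  have hiter : ∀ (t : ℕ) (m : ℤ), Relation.ReflTransGen rel (false, m) (false, m + 2*s*t) := by
    intro t
    induction t with
    | zero =>
      intro m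
      rw [show m + 2*(s:ℤ)*((0:ℕ):ℤ) = m from by push_cast; ring]
    | succ n ih =>
      intro m
      have h1 := ih m
      have h2 := hmove_plus (m + 2*s*n)
      rw [show m + 2*(s:ℤ)*(n:ℤ) + 2*(s:ℤ) = m + 2*s*((n:ℤ)+1) from by ring] at h2
      rw [show ((n+1:ℕ):ℤ) = (n:ℤ)+1 from by push_cast; ring]
      exact h1.trans h2
  have hsolve : ∀ c : ℤ, ∃ t : ℕ, (k:ℤ) ∣ ((s:ℤ)*t - c) := by
    intro c
    have hunit : IsUnit ((s:ℕ) : ZMod k) := (ZMod.isUnit_iff_coprime s k).mpr hcop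
    refine ⟨(((c : ZMod k) * ((s:ℕ) : ZMod k)⁻¹).val), ?_⟩
    rw [← ZMod.intCast_zmod_eq_zero_iff_dvd]
    push_cast
    rw [ZMod.natCast_val, ZMod.cast_id]
    linear_combination (c : ZMod k) * (ZMod.mul_inv_of_unit ((s:ℕ) : ZMod k) hunit)
  have reach_up : ∀ m : ℤ, Relation.ReflTransGen rel (false, m) (false, 0) := by
    intro m
    rcases Int.even_or_odd m with ⟨a, ha⟩ | ⟨a, ha⟩
    · obtain ⟨t, q, hq⟩ := hsolve (-a)
      refine (hiter t m).tail (hIdent _ _ (Or.inl ⟨q, ?_⟩))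
      linear_combination 4*hq + 2*ha
    · obtain ⟨t, q, hq⟩ := hsolve (-(a+1))
      refine (hiter t m).tail (hIdent _ _ (Or.inr ⟨q, ?_⟩))
      linear_combination 4*hq + 2*ha
  have reach : ∀ z : Bool × ℤ, Relation.ReflTransGen rel z (false, 0) := by
    rintro ⟨b, m⟩
    cases b
    · exact reach_up m
    · have h := hstep2 (m + s)
      rw [show m + (s:ℤ) - s = m from by ring] at h
      exact (Relation.ReflTransGen.single h).trans (reach_up _)
  have K : ∀ z w : Bool × ℤ, Relation.ReflTransGen rel z w := by
    intro z w
    have hsymm' : Symmetric rel := fun {a b} h => hsymm a b h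
    haveI : Std.Symm rel := ⟨hsymm⟩
    exact (reach z).trans (Std.Symm.symm (r := Relation.ReflTransGen rel) _ _ (reach w))
  -- connectedness
  have hconn : IsConnected (sigmaSphere k x₀ y₀) := by
    rw [hσ]
    exact IsConnected.iUnion_of_reflTransGen hSconn K
  -- closedness
  have hcont2 : Continuous fun p : E3' => p 2 :=
    (EuclideanSpace.proj (2 : Fin 3) : E3' →L[ℝ] ℝ).continuous
  have hcontdx : Continuous fun p : E3' => sphereDist p x₀ := by
    unfold sphereDist
    exact Real.continuous_arccos.comp (continuous_id.inner continuous_const)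
  have hcontdy : Continuous fun p : E3' => sphereDist p y₀ := by
    unfold sphereDist
    exact Real.continuous_arccos.comp (continuous_id.inner continuous_const)
  have hclosed : IsClosed (sigmaSphere k x₀ y₀) := by
    rw [sigmaSphere]
    apply IsClosed.union
    · have hrw : {p : E3' | p ∈ Metric.sphere (0:E3') 1 ∧ 0 ≤ p 2 ∧
          ∃ i : ℕ, i < k ∧ sphereDist p x₀ = (1 + 2 * i) * (π / (2 * k))} =
          (Metric.sphere (0:E3') 1) ∩ ({p : E3' | 0 ≤ p 2} ∩
            ⋃ i ∈ Finset.range k,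
              {p : E3' | sphereDist p x₀ = (1 + 2 * (i:ℕ)) * (π / (2 * (k:ℕ)))}) := by
        ext p
        (simp only [Set.mem_inter_iff, Set.mem_setOf_eq, Set.mem_iUnion, Finset.mem_range,
          exists_prop]) <;> tauto
      rw [hrw]
      exact Metric.isClosed_sphere.inter ((isClosed_le continuous_const hcont2).inter
        (Set.Finite.isClosed_biUnion (Finset.finite_toSet _)
          (fun i _ => isClosed_eq hcontdx continuous_const)))
    · have hrw : {p : E3' | p ∈ Metric.sphere (0:E3') 1 ∧ p 2 ≤ 0 ∧
          ∃ i : ℕ, i < k ∧ sphereDist p y₀ = (1 + 2 * i) * (π / (2 * k))} =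
          (Metric.sphere (0:E3') 1) ∩ ({p : E3' | p 2 ≤ 0} ∩
            ⋃ i ∈ Finset.range k,
              {p : E3' | sphereDist p y₀ = (1 + 2 * (i:ℕ)) * (π / (2 * (k:ℕ)))}) := by
        ext p
        (simp only [Set.mem_inter_iff, Set.mem_setOf_eq, Set.mem_iUnion, Finset.mem_range,
          exists_prop]) <;> tauto
      rw [hrw]
      exact Metric.isClosed_sphere.inter ((isClosed_le hcont2 continuous_const).inter
        (Set.Finite.isClosed_biUnion (Finset.finite_toSet _)
          (fun i _ => isClosed_eq hcontdy continuous_const)))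
  have hsub : sigmaSphere k x₀ y₀ ⊆ Metric.sphere (0:E3') 1 := by
    rintro p (⟨h, _⟩ | ⟨h, _⟩) <;> exact h
  exact ⟨hsub, hclosed, hconn⟩

end
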